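/- Let f ≥ 2. For two different nodes x_i and x_j in the uniform recursive tree U_g, with labels {i_0, i_1, …, i_{n_i}} and {j_0, j_1, …, j_{n_j}} respectively (where i_0 = j_0 = 0), the diagonal entries of the pseudoinverse L†(g) compare as follows: (1) if n_i > n_j then L†_{x_i x_i}(g) > L†_{x_j x_j}(g); (2) if n_i < n_j then L†_{x_i x_i}(g) < L†_{x_j x_j}(g); (3) if n_i = n_j and there exists an index z with 0 ≤ z ≤ n_i such that i_l = j_l for l = 0,1,…,z−1 but i_z ≠ j_z, then L†_{x_i x_i}(g) > L†_{x_j x_j}(g) if i_z > j_z, and L†_{x_i x_i}(g) < L†_{x_j x_j}(g) if i_z < j_z; (4) if n_i = n_j and i_l = j_l for all l = 0,1,…,n_i, then L†_{x_i x_i}(g) = L†_{x_j x_j}(g). -/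

import Mathlib

open Matrix BigOperators

/-- The vertices of the uniform recursive tree `U_g` with branching parameter `f`:
`U_0` is a single node (the central node), and at each iteration every existing
node receives `f` new leaf children. -/
def URTV (f : ℕ) : ℕ → Type
  | 0 => Unit
  | g + 1 => URTV f g ⊕ (URTV f g × Fin f)

instance urtFintype (f : ℕ) : ∀ g, Fintype (URTV f g)
  | 0 => inferInstanceAs (Fintype Unit)
  | g + 1 =>
    letI := urtFintype f g
    inferInstanceAs (Fintype (URTV f g ⊕ (URTV f g × Fin f)))

instance urtDecEq (f : ℕ) : ∀ g, DecidableEq (URTV f g)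
  | 0 => inferInstanceAs (DecidableEq Unit)
  | g + 1 =>
    letI := urtDecEq f g
    inferInstanceAs (DecidableEq (URTV f g ⊕ (URTV f g × Fin f)))

/-- The adjacency relation of `U_g`: each new leaf is joined to the node it was
attached to. -/
def urtRel (f : ℕ) : ∀ g, URTV f g → URTV f g → Prop
  | 0, _, _ => False
  | g + 1, Sum.inl x, Sum.inl y => urtRel f g x y
  | _ + 1, Sum.inl x, Sum.inr (y, _) => x = y
  | _ + 1, Sum.inr (x, _), Sum.inl y => x = y
  | _ + 1, Sum.inr _, Sum.inr _ => False

/-- The uniform recursive tree `U_g` as a simple graph. -/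
def urtGraph (f g : ℕ) : SimpleGraph (URTV f g) :=
  SimpleGraph.fromRel (urtRel f g)

/-- The central node of `U_g`. -/
def urtCenter (f : ℕ) : ∀ g, URTV f g
  | 0 => ()
  | g + 1 => Sum.inl (urtCenter f g)

/-- The label `{0, i_1, …, i_n}` of a node of `U_g`: the increasing list of levels
(creation iterations) of the nodes on the unique path from the central node to the
node.  The central node has label `[0]`; a node created at iteration `g+1` appends
`g+1` to the label of the node it was attached to. -/
def urtLabel (f : ℕ) : ∀ g, URTV f g → List ℕ
  | 0, _ => [0]
  | g + 1, Sum.inl x => urtLabel f g x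
  | g + 1, Sum.inr (x, _) => urtLabel f g x ++ [g + 1]

/-- The all-ones matrix `J`. -/
def JMat (V : Type*) : Matrix V V ℝ := Matrix.of fun _ _ => (1 : ℝ)

/-- The Laplacian matrix (over `ℝ`) of a simple graph (all edge weights `1`). -/
noncomputable def glap {V : Type*} [Fintype V] (G : SimpleGraph V) : Matrix V V ℝ := by
  classical exact SimpleGraph.lapMatrix ℝ G

/-- The pseudoinverse `L† = (L + (1/N)·J)⁻¹ - (1/N)·J` of the graph Laplacian. -/
noncomputable def gdag {V : Type*} [Fintype V] [DecidableEq V] (G : SimpleGraph V) :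
    Matrix V V ℝ :=
  (glap G + ((Fintype.card V : ℝ))⁻¹ • JMat V)⁻¹ - ((Fintype.card V : ℝ))⁻¹ • JMat V

def urtDist (f : ℕ) : ∀ g, URTV f g → URTV f g → ℕ
  | 0, _, _ => 0
  | g+1, Sum.inl x, Sum.inl y => urtDist f g x y
  | g+1, Sum.inl x, Sum.inr (y, _) => urtDist f g x y + 1
  | g+1, Sum.inr (x, _), Sum.inl y => urtDist f g x y + 1
  | g+1, Sum.inr (x, i), Sum.inr (y, j) =>
      if x = y ∧ i = j then 0 else urtDist f g x y + 2
lemma urtDist_self (f : ℕ) : ∀ g (x : URTV f g), urtDist f g x x = 0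
  | 0, _ => rfl
  | g+1, Sum.inl x => urtDist_self f g x
  | g+1, Sum.inr (x, i) => by simp [urtDist]
lemma urtDist_symm (f : ℕ) : ∀ g (x y : URTV f g), urtDist f g x y = urtDist f g y x
  | 0, _, _ => rfl
  | g+1, Sum.inl x, Sum.inl y => urtDist_symm f g x y
  | g+1, Sum.inl x, Sum.inr (y, j) => by simp [urtDist, urtDist_symm f g x y]
  | g+1, Sum.inr (x, i), Sum.inl y => by simp [urtDist, urtDist_symm f g x y]
  | g+1, Sum.inr (x, i), Sum.inr (y, j) => by
      by_cases h : x = y ∧ i = j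
      · obtain ⟨rfl, rfl⟩ := h; rfl
      · have h' : ¬ (y = x ∧ j = i) := by tauto
        simp [urtDist, h, h', urtDist_symm f g x y]

lemma adj_ll (f g : ℕ) (x y : URTV f g) :
    (urtGraph f (g+1)).Adj (Sum.inl x) (Sum.inl y) ↔ (urtGraph f g).Adj x y := by
  simp only [urtGraph, SimpleGraph.fromRel_adj]
  constructor
  · rintro ⟨hne, h⟩
    exact ⟨fun h' => hne (by rw [h']), by exact h⟩
  · rintro ⟨hne, h⟩
    exact ⟨fun h' => hne (Sum.inl.inj h'), h⟩
lemma adj_lr (f g : ℕ) (x y : URTV f g) (j : Fin f) :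
    (urtGraph f (g+1)).Adj (Sum.inl x) (Sum.inr (y, j)) ↔ x = y := by
  simp only [urtGraph, SimpleGraph.fromRel_adj]
  constructor
  · rintro ⟨hne, h | h⟩
    · exact h
    · exact (show y = x from h).symm
  · rintro rfl
    exact ⟨Sum.inl_ne_inr, Or.inl rfl⟩
lemma adj_rl (f g : ℕ) (x y : URTV f g) (i : Fin f) :
    (urtGraph f (g+1)).Adj (Sum.inr (x, i)) (Sum.inl y) ↔ x = y := by
  simp only [urtGraph, SimpleGraph.fromRel_adj]
  constructor
  · rintro ⟨hne, h | h⟩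
    · exact h
    · exact (show y = x from h).symm
  · rintro rfl
    exact ⟨Sum.inr_ne_inl, Or.inl rfl⟩
lemma adj_rr (f g : ℕ) (p q : URTV f g × Fin f) :
    ¬ (urtGraph f (g+1)).Adj (Sum.inr p) (Sum.inr q) := by
  obtain ⟨x,i⟩ := p; obtain ⟨y,j⟩ := q
  intro h; rcases h.2 with h' | h' <;> exact h'

open scoped Classical

lemma sum_split (f g : ℕ) (F : URTV f (g+1) → ℝ) :
    ∑ v : URTV f (g+1), F v
      = ∑ x : URTV f g, F (Sum.inl x) + ∑ p : URTV f g × Fin f, F (Sum.inr p) :=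
  Fintype.sum_sum_type F

noncomputable def DegR (f g : ℕ) (u : URTV f g) : ℝ :=
  ∑ w, if (urtGraph f g).Adj u w then (1:ℝ) else 0

noncomputable def AS (f g : ℕ) (u v : URTV f g) : ℝ :=
  ∑ w, if (urtGraph f g).Adj u w then ((urtDist f g w v : ℝ)) else 0

lemma DegR_zero (f : ℕ) (u : URTV f 0) : DegR f 0 u = 0 := by
  unfold DegR
  apply Finset.sum_eq_zero
  intro w _
  rw [if_neg]
  simp [urtGraph, SimpleGraph.fromRel_adj, urtRel]

lemma DegR_inl (f g : ℕ) (x : URTV f g) :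
    DegR f (g+1) (Sum.inl x) = DegR f g x + f := by
  unfold DegR
  rw [sum_split]
  congr 1
  · exact Finset.sum_congr rfl fun w _ => by simp [adj_ll]
  · rw [Fintype.sum_prod_type]
    simp [adj_lr, Finset.sum_ite_eq]

lemma DegR_inr (f g : ℕ) (x : URTV f g) (i : Fin f) :
    DegR f (g+1) (Sum.inr (x, i)) = 1 := by
  unfold DegR
  rw [sum_split]
  have h2 : ∑ p : URTV f g × Fin f,
      (if (urtGraph f (g+1)).Adj (Sum.inr (x,i)) (Sum.inr p) then (1:ℝ) else 0) = 0 := by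
    apply Finset.sum_eq_zero; intro p _; rw [if_neg (adj_rr f g _ p)]
  rw [h2, add_zero]
  simp [adj_rl, Finset.sum_ite_eq]

lemma split_ite {α : Type*} (s : Finset α) (P : α → Prop) (A B : α → ℝ) :
    (∑ w ∈ s, if P w then A w + B w else 0)
      = (∑ w ∈ s, if P w then A w else 0) + (∑ w ∈ s, if P w then B w else 0) := by
  rw [← Finset.sum_add_distrib]
  apply Finset.sum_congr rfl
  intro w _
  split <;> simp

lemma AS_eq (f : ℕ) : ∀ g, ∀ u v : URTV f g,
    (u = v → AS f g u v = DegR f g u) ∧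
    (u ≠ v → AS f g u v = DegR f g u * ((urtDist f g u v : ℝ) + 1) - 2) := by
  intro g
  induction g with
  | zero =>
    intro u v
    have huv : u = v := by
      have h : ∀ a b : Unit, a = b := fun a b => rfl
      exact h u v
    constructor
    · intro _
      have hA : AS f 0 u v = 0 := by
        apply Finset.sum_eq_zero
        intro w _
        rw [if_neg]
        simp [urtGraph, SimpleGraph.fromRel_adj, urtRel]
      rw [hA, DegR_zero]
    · intro h; exact absurd huv h
  | succ g IH =>
    rintro (x | ⟨x, i⟩) (y | ⟨y, j⟩)
    · -- inl inl
      have hAS : AS f (g+1) (Sum.inl x) (Sum.inl y)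
          = AS f g x y + f * ((urtDist f g x y : ℝ) + 1) := by
        unfold AS
        rw [sum_split]
        congr 1
        · apply Finset.sum_congr rfl
          intro w _
          simp [adj_ll, urtDist]
        · rw [Fintype.sum_prod_type]
          simp only [adj_lr, urtDist]
          rw [Finset.sum_comm]
          simp [Finset.sum_ite_eq, mul_comm]
          push_cast
          ring
      constructor
      · intro h
        injection h with h'
        subst h'
        rw [hAS, (IH x x).1 rfl, urtDist_self, DegR_inl]
        push_cast
        ring
      · intro h
        have hxy : x ≠ y := fun h' => h (by rw [h'])
        rw [hAS, (IH x y).2 hxy, DegR_inl]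
        have hd : urtDist f (g+1) (Sum.inl x) (Sum.inl y) = urtDist f g x y := rfl
        rw [hd]
        ring
    · -- inl inr
      have hAS : AS f (g+1) (Sum.inl x) (Sum.inr (y, j))
          = (AS f g x y + DegR f g x)
            + ∑ j' : Fin f, ((urtDist f (g+1) (Sum.inr (x,j')) (Sum.inr (y,j)) : ℝ)) := by
        unfold AS
        rw [sum_split]
        congr 1
        · have : ∀ w : URTV f g,
              (if (urtGraph f (g+1)).Adj (Sum.inl x) (Sum.inl w)
                then ((urtDist f (g+1) (Sum.inl w) (Sum.inr (y,j)) : ℝ)) else 0)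
              = (if (urtGraph f g).Adj x w then ((urtDist f g w y : ℝ) + 1) else 0) := by
            intro w
            simp [adj_ll, urtDist]
          rw [Finset.sum_congr rfl fun w _ => this w]
          rw [split_ite]
          rfl
        · rw [Fintype.sum_prod_type]
          rw [Finset.sum_comm]
          simp only [adj_lr]
          simp [Finset.sum_ite_eq]
      constructor
      · intro h; exact absurd h (by simp)
      · intro _
        have hd : urtDist f (g+1) (Sum.inl x) (Sum.inr (y,j)) = urtDist f g x y + 1 := rfl
        by_cases hxy : x = y
        · subst hxy
          have hsum : ∑ j' : Fin f,
              ((urtDist f (g+1) (Sum.inr (x,j')) (Sum.inr (x,j)) : ℝ)) = 2 * f - 2 := by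
            have hval : ∀ j' : Fin f,
                ((urtDist f (g+1) (Sum.inr (x,j')) (Sum.inr (x,j)) : ℝ))
                  = 2 - (if j' = j then 2 else 0) := by
              intro j'
              by_cases hj : j' = j
              · subst hj
                simp [urtDist, urtDist_self]
              · have : urtDist f (g+1) (Sum.inr (x,j')) (Sum.inr (x,j))
                    = urtDist f g x x + 2 := by
                  simp [urtDist, hj]
                rw [this, urtDist_self]
                simp [hj]
            rw [Finset.sum_congr rfl fun j' _ => hval j']
            rw [Finset.sum_sub_distrib]
            simp [Finset.sum_ite_eq]
            ring
          rw [hAS, hsum, (IH x x).1 rfl, hd, urtDist_self, DegR_inl]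
          push_cast
          ring
        · have hsum : ∑ j' : Fin f,
              ((urtDist f (g+1) (Sum.inr (x,j')) (Sum.inr (y,j)) : ℝ))
                = f * ((urtDist f g x y : ℝ) + 2) := by
            have hval : ∀ j' : Fin f,
                ((urtDist f (g+1) (Sum.inr (x,j')) (Sum.inr (y,j)) : ℝ))
                  = (urtDist f g x y : ℝ) + 2 := by
              intro j'
              have : urtDist f (g+1) (Sum.inr (x,j')) (Sum.inr (y,j))
                  = urtDist f g x y + 2 := by
                simp [urtDist, hxy]
              rw [this]; push_cast; ring
            rw [Finset.sum_congr rfl fun j' _ => hval j']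
            simp [mul_comm]
            ring
          rw [hAS, hsum, (IH x y).2 hxy, hd, DegR_inl]
          push_cast
          ring
    · -- inr inl
      have hAS : AS f (g+1) (Sum.inr (x,i)) (Sum.inl y) = (urtDist f g x y : ℝ) := by
        unfold AS
        rw [sum_split]
        have h2 : ∑ p : URTV f g × Fin f,
            (if (urtGraph f (g+1)).Adj (Sum.inr (x,i)) (Sum.inr p)
              then ((urtDist f (g+1) (Sum.inr p) (Sum.inl y) : ℝ)) else 0) = 0 := by
          apply Finset.sum_eq_zero
          intro p _
          rw [if_neg (adj_rr f g _ p)]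
        rw [h2, add_zero]
        have : ∀ w : URTV f g,
            (if (urtGraph f (g+1)).Adj (Sum.inr (x,i)) (Sum.inl w)
              then ((urtDist f (g+1) (Sum.inl w) (Sum.inl y) : ℝ)) else 0)
            = (if x = w then ((urtDist f g w y : ℝ)) else 0) := by
          intro w
          simp [adj_rl, urtDist]
        rw [Finset.sum_congr rfl fun w _ => this w]
        simp [Finset.sum_ite_eq]
      constructor
      · intro h; exact absurd h (by simp)
      · intro _
        have hd : urtDist f (g+1) (Sum.inr (x,i)) (Sum.inl y) = urtDist f g x y + 1 := rfl
        rw [hAS, hd, DegR_inr]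
        push_cast
        ring
    · -- inr inr
      have hAS : AS f (g+1) (Sum.inr (x,i)) (Sum.inr (y,j)) = (urtDist f g x y : ℝ) + 1 := by
        unfold AS
        rw [sum_split]
        have h2 : ∑ p : URTV f g × Fin f,
            (if (urtGraph f (g+1)).Adj (Sum.inr (x,i)) (Sum.inr p)
              then ((urtDist f (g+1) (Sum.inr p) (Sum.inr (y,j)) : ℝ)) else 0) = 0 := by
          apply Finset.sum_eq_zero
          intro p _
          rw [if_neg (adj_rr f g _ p)]
        rw [h2, add_zero]
        have : ∀ w : URTV f g,
            (if (urtGraph f (g+1)).Adj (Sum.inr (x,i)) (Sum.inl w)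
              then ((urtDist f (g+1) (Sum.inl w) (Sum.inr (y,j)) : ℝ)) else 0)
            = (if x = w then ((urtDist f g w y : ℝ) + 1) else 0) := by
          intro w
          simp [adj_rl, urtDist]
        rw [Finset.sum_congr rfl fun w _ => this w]
        simp [Finset.sum_ite_eq]
      constructor
      · intro h
        replace h := Prod.mk.inj (Sum.inr.inj h)
        obtain ⟨rfl, rfl⟩ := h
        rw [hAS, urtDist_self, DegR_inr]
        simp
      · intro h
        have hne : ¬ (x = y ∧ i = j) := by
          rintro ⟨rfl, rfl⟩
          exact h rfl
        have hd : urtDist f (g+1) (Sum.inr (x,i)) (Sum.inr (y,j))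
            = urtDist f g x y + 2 := by
          simp [urtDist, hne]
        rw [hAS, hd, DegR_inr]
        push_cast
        ring


section MatrixPart

variable (f g : ℕ)

lemma glap_apply (u v : URTV f g) :
    glap (urtGraph f g) u v
      = (if u = v then DegR f g u else 0) - (if (urtGraph f g).Adj u v then 1 else 0) := by
  have hrw : glap (urtGraph f g) = (urtGraph f g).lapMatrix ℝ := by
    unfold glap
    congr! <;> exact Subsingleton.elim _ _
  rw [hrw, SimpleGraph.lapMatrix, Matrix.sub_apply]
  have hdeg : ∀ a : URTV f g, (((urtGraph f g).degree a : ℝ)) = DegR f g a := by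
    intro a
    unfold DegR
    rw [SimpleGraph.degree, SimpleGraph.neighborFinset_eq_filter, Finset.card_filter]
    push_cast
    exact Finset.sum_congr rfl fun w _ => by split <;> simp
  rw [SimpleGraph.degMatrix]
  by_cases h : u = v <;> by_cases h2 : (urtGraph f g).Adj u v <;>
    simp [h, h2, hdeg, Matrix.diagonal, SimpleGraph.adjMatrix_apply]

noncomputable def HMat : Matrix (URTV f g) (URTV f g) ℝ :=
  Matrix.of fun u v => (urtDist f g u v : ℝ)

noncomputable def DgMat : Matrix (URTV f g) (URTV f g) ℝ :=
  Matrix.diagonal (DegR f g)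

lemma mul_LJ : glap (urtGraph f g) * JMat (URTV f g) = 0 := by
  ext u v
  rw [Matrix.mul_apply]
  simp only [JMat, Matrix.of_apply, mul_one, Matrix.zero_apply]
  rw [Finset.sum_congr rfl fun w _ => glap_apply f g u w]
  rw [Finset.sum_sub_distrib]
  simp [Finset.sum_ite_eq, DegR]

lemma mul_JJ : JMat (URTV f g) * JMat (URTV f g)
    = ((Fintype.card (URTV f g) : ℝ)) • JMat (URTV f g) := by
  ext u v
  rw [Matrix.mul_apply]
  simp [JMat, Finset.card_univ]

lemma mul_LH : glap (urtGraph f g) * HMat f g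
    = (2:ℝ) • JMat (URTV f g) - (2:ℝ) • (1 : Matrix (URTV f g) (URTV f g) ℝ)
      - DgMat f g * JMat (URTV f g) := by
  ext u v
  rw [Matrix.mul_apply]
  have hsum : ∑ w, glap (urtGraph f g) u w * HMat f g w v
      = DegR f g u * (urtDist f g u v : ℝ) - AS f g u v := by
    rw [Finset.sum_congr rfl fun w _ => by rw [glap_apply f g u w]]
    have : ∀ w, ((if u = w then DegR f g u else 0) - (if (urtGraph f g).Adj u w then 1 else 0))
        * HMat f g w v
        = (if u = w then DegR f g u * (urtDist f g w v : ℝ) else 0)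
          - (if (urtGraph f g).Adj u w then ((urtDist f g w v : ℝ)) else 0) := by
      intro w
      simp only [HMat, Matrix.of_apply]
      split <;> split <;> ring
    rw [Finset.sum_congr rfl fun w _ => this w]
    rw [Finset.sum_sub_distrib]
    have h1 : ∑ w, (if u = w then DegR f g u * (urtDist f g w v : ℝ) else 0)
        = DegR f g u * (urtDist f g u v : ℝ) := by simp [Finset.sum_ite_eq]
    rw [h1]
    rfl
  rw [hsum]
  have hDgJ : (DgMat f g * JMat (URTV f g)) u v = DegR f g u := by
    rw [Matrix.mul_apply]
    simp [DgMat, JMat, Matrix.diagonal, Finset.sum_ite_eq]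
  simp only [Matrix.sub_apply, Matrix.smul_apply, smul_eq_mul, hDgJ]
  simp only [JMat, Matrix.of_apply, Matrix.one_apply]
  by_cases h : u = v
  · subst h
    rw [(AS_eq f g u u).1 rfl, urtDist_self]
    simp
  · rw [(AS_eq f g u v).2 h]
    simp [h]
    ring

end MatrixPart

lemma urtNonempty (f : ℕ) : ∀ g, Nonempty (URTV f g)
  | 0 => ⟨()⟩
  | g+1 => ⟨Sum.inl (urtNonempty f g).some⟩

section Inverse

variable (f g : ℕ)

noncomputable def cN : ℝ := ((Fintype.card (URTV f g) : ℝ))⁻¹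

noncomputable def KMat : Matrix (URTV f g) (URTV f g) ℝ :=
  (-(2:ℝ)⁻¹) • (HMat f g
    - cN f g • (JMat (URTV f g) * HMat f g)
    - cN f g • (HMat f g * JMat (URTV f g))
    + (cN f g * cN f g) • (JMat (URTV f g) * HMat f g * JMat (URTV f g)))

lemma hn_ne (f g : ℕ) : ((Fintype.card (URTV f g) : ℝ)) ≠ 0 := by
  have := urtNonempty f g
  have h : 0 < Fintype.card (URTV f g) := Fintype.card_pos
  positivity

lemma key_inverse :
    (glap (urtGraph f g) + cN f g • JMat (URTV f g)) * (KMat f g + cN f g • JMat (URTV f g))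
      = 1 := by
  set n : ℝ := ((Fintype.card (URTV f g) : ℝ)) with hn
  have hne : n ≠ 0 := hn_ne f g
  have hc : cN f g = n⁻¹ := rfl
  set J := JMat (URTV f g)
  set L := glap (urtGraph f g)
  set H := HMat f g
  set Dg := DgMat f g
  have hLJ : L * J = 0 := mul_LJ f g
  have hJJ : J * J = n • J := mul_JJ f g
  have hLH : L * H = (2:ℝ) • J - (2:ℝ) • 1 - Dg * J := mul_LH f g
  have hLJH : L * (J * H) = 0 := by rw [← Matrix.mul_assoc, hLJ, Matrix.zero_mul]
  have hLHJ : L * (H * J) = (2:ℝ) • (n • J) - (2:ℝ) • J - n • (Dg * J) := by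
    rw [← Matrix.mul_assoc, hLH, Matrix.sub_mul, Matrix.sub_mul, Matrix.smul_mul,
      Matrix.smul_mul, hJJ, Matrix.one_mul, Matrix.mul_assoc, hJJ, Matrix.mul_smul]
  have hLJHJ : L * (J * H * J) = 0 := by
    rw [← Matrix.mul_assoc, ← Matrix.mul_assoc, hLJ, Matrix.zero_mul, Matrix.zero_mul]
  have hJJH : J * (J * H) = n • (J * H) := by
    rw [← Matrix.mul_assoc, hJJ, Matrix.smul_mul]
  have hJHJ : J * (H * J) = (J * H) * J := by rw [Matrix.mul_assoc]
  have hJJHJ : J * (J * H * J) = n • (J * H * J) := by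
    rw [← Matrix.mul_assoc, ← Matrix.mul_assoc, hJJ, Matrix.smul_mul, Matrix.smul_mul]
  have h1 : L * KMat f g = 1 - cN f g • J := by
    unfold KMat
    rw [Matrix.mul_smul, Matrix.mul_add, Matrix.mul_sub, Matrix.mul_sub,
      Matrix.mul_smul, Matrix.mul_smul, Matrix.mul_smul, hLJH, hLHJ, hLJHJ, hLH]
    simp only [hc]
    match_scalars <;> field_simp <;> ring
  have h2 : (cN f g • J) * KMat f g = 0 := by
    unfold KMat
    rw [Matrix.smul_mul, Matrix.mul_smul, Matrix.mul_add, Matrix.mul_sub, Matrix.mul_sub,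
      Matrix.mul_smul, Matrix.mul_smul, Matrix.mul_smul, hJJH, hJHJ, hJJHJ]
    simp only [hc]
    match_scalars <;> field_simp <;> ring
  have h3 : (cN f g • J) * (cN f g • J) = cN f g • J := by
    rw [Matrix.smul_mul, Matrix.mul_smul, hJJ]
    simp only [hc]
    match_scalars
    field_simp
  rw [Matrix.add_mul, Matrix.mul_add, Matrix.mul_add, h1, h2, h3, Matrix.mul_smul, hLJ]
  simp

lemma gdag_eq_K : gdag (urtGraph f g) = KMat f g := by
  unfold gdag
  have h := Matrix.inv_eq_right_inv (key_inverse f g)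
  rw [show ((Fintype.card (URTV f g) : ℝ))⁻¹ = cN f g from rfl, h]
  abel

noncomputable def DDR (f g : ℕ) (x : URTV f g) : ℝ := ∑ v, (urtDist f g x v : ℝ)

lemma gdag_diag (x : URTV f g) :
    gdag (urtGraph f g) x x
      = cN f g * DDR f g x
        - (cN f g * cN f g) * (∑ u, ∑ v, (urtDist f g u v : ℝ)) / 2 := by
  rw [gdag_eq_K]
  unfold KMat
  have hJH : (JMat (URTV f g) * HMat f g) x x = DDR f g x := by
    rw [Matrix.mul_apply]
    unfold DDR
    apply Finset.sum_congr rfl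
    intro w _
    simp [JMat, HMat, urtDist_symm f g w x]
  have hHJ : (HMat f g * JMat (URTV f g)) x x = DDR f g x := by
    rw [Matrix.mul_apply]
    unfold DDR
    apply Finset.sum_congr rfl
    intro w _
    simp [JMat, HMat]
  have hJHJ : (JMat (URTV f g) * HMat f g * JMat (URTV f g)) x x
      = ∑ u, ∑ v, (urtDist f g u v : ℝ) := by
    rw [Matrix.mul_apply]
    have : ∀ v, (JMat (URTV f g) * HMat f g) x v * JMat (URTV f g) v x
        = ∑ w, (urtDist f g w v : ℝ) := by
      intro v
      rw [Matrix.mul_apply]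
      simp [JMat, HMat]
    rw [Finset.sum_congr rfl fun v _ => this v]
    rw [Finset.sum_comm]
  simp only [Matrix.smul_apply, Matrix.add_apply, Matrix.sub_apply, hJH, hHJ, hJHJ,
    Matrix.smul_apply, smul_eq_mul]
  have hH : HMat f g x x = 0 := by simp [HMat, urtDist_self]
  rw [hH]
  ring

lemma gdag_diag_sub (x y : URTV f g) :
    gdag (urtGraph f g) x x - gdag (urtGraph f g) y y
      = cN f g * (DDR f g x - DDR f g y) := by
  rw [gdag_diag, gdag_diag]
  ring

end Inverse

lemma urtCard (f : ℕ) : ∀ g, Fintype.card (URTV f g) = (f+1)^g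
  | 0 => by
    rw [Fintype.card_congr' (α := URTV f 0) (β := Unit) rfl]
    simp
  | g+1 => by
    rw [Fintype.card_congr' (α := URTV f (g+1)) (β := URTV f g ⊕ (URTV f g × Fin f)) rfl]
    rw [Fintype.card_sum, Fintype.card_prod, Fintype.card_fin, urtCard f g]
    ring

lemma DDR_inl (f g : ℕ) (x : URTV f g) :
    DDR f (g+1) (Sum.inl x)
      = DDR f g x + f * (DDR f g x + ((f:ℝ)+1)^g) := by
  unfold DDR
  rw [sum_split]
  congr 1
  rw [Fintype.sum_prod_type]
  have : ∀ v : URTV f g, ∑ _j : Fin f, ((urtDist f (g+1) (Sum.inl x) (Sum.inr (v, _j)) : ℝ))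
      = f * ((urtDist f g x v : ℝ) + 1) := by
    intro v
    have hd : ∀ j : Fin f, urtDist f (g+1) (Sum.inl x) (Sum.inr (v, j))
        = urtDist f g x v + 1 := fun j => rfl
    rw [Finset.sum_congr rfl fun j _ => by rw [hd j]]
    rw [Finset.sum_const, Finset.card_univ, Fintype.card_fin]
    push_cast
    ring
  rw [Finset.sum_congr rfl fun v _ => this v]
  rw [← Finset.mul_sum]
  have hcard : ∑ v : URTV f g, ((urtDist f g x v : ℝ) + 1)
      = (∑ v : URTV f g, (urtDist f g x v : ℝ)) + ((f:ℝ)+1)^g := by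
    rw [Finset.sum_add_distrib, Finset.sum_const, Finset.card_univ, urtCard]
    push_cast
    ring
  rw [hcard]

lemma DDR_inr (f g : ℕ) (x : URTV f g) (i : Fin f) :
    DDR f (g+1) (Sum.inr (x, i))
      = DDR f (g+1) (Sum.inl x) + ((f:ℝ)+1)^(g+1) - 2 := by
  unfold DDR
  have hpt : ∀ v : URTV f (g+1),
      ((urtDist f (g+1) (Sum.inr (x,i)) v : ℝ))
        = ((urtDist f (g+1) (Sum.inl x) v : ℝ)) + 1
          - (if v = Sum.inr (x,i) then 2 else 0) := by
    rintro (y | ⟨y, j⟩)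
    · have h1 : urtDist f (g+1) (Sum.inr (x,i)) (Sum.inl y) = urtDist f g x y + 1 := rfl
      have h2 : urtDist f (g+1) (Sum.inl x) (Sum.inl y) = urtDist f g x y := rfl
      rw [h1, h2, if_neg (by simp)]
      push_cast
      ring
    · have h2 : urtDist f (g+1) (Sum.inl x) (Sum.inr (y,j)) = urtDist f g x y + 1 := rfl
      by_cases h : x = y ∧ i = j
      · obtain ⟨rfl, rfl⟩ := h
        have h1 : urtDist f (g+1) (Sum.inr (x,i)) (Sum.inr (x,i)) = 0 := by
          simp [urtDist]
        rw [h1, h2, if_pos (@rfl (URTV f (g+1)) (Sum.inr (x,i))), urtDist_self]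
        push_cast
        ring
      · have h1 : urtDist f (g+1) (Sum.inr (x,i)) (Sum.inr (y,j)) = urtDist f g x y + 2 := by
          simp [urtDist, h]
        have hne : (Sum.inr (y,j) : URTV f (g+1)) ≠ Sum.inr (x,i) := by
          intro heq
          rw [Sum.inr.injEq, Prod.mk.injEq] at heq
          exact h ⟨heq.1.symm, heq.2.symm⟩
        rw [h1, h2, if_neg (c := @Eq (URTV f (g+1)) (Sum.inr (y,j)) (Sum.inr (x,i))) hne]
        push_cast
        ring
  rw [Finset.sum_congr rfl fun v _ => hpt v]
  rw [Finset.sum_sub_distrib, Finset.sum_add_distrib]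
  rw [Finset.sum_const, Finset.card_univ, urtCard]
  have hs : (∑ v : URTV f (g+1), if v = Sum.inr (x,i) then (2:ℝ) else 0) = 2 :=
    by convert (Finset.sum_ite_eq' (ι := URTV f (g+1)) Finset.univ (Sum.inr (x,i))
      (fun _ => (2:ℝ))).trans (if_pos (Finset.mem_univ _))
  rw [hs]
  push_cast
  ring


lemma label_shape (f : ℕ) : ∀ g (x : URTV f g), ∃ t : List ℕ, urtLabel f g x = 0 :: t
  | 0, _ => ⟨[], rfl⟩
  | g+1, Sum.inl x => label_shape f g x
  | g+1, Sum.inr (x, i) => by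
    obtain ⟨t, ht⟩ := label_shape f g x
    exact ⟨t ++ [g+1], by simp [urtLabel, ht]⟩

lemma label_le (f : ℕ) : ∀ g (x : URTV f g), ∀ i ∈ urtLabel f g x, i ≤ g
  | 0, _ => by intro i hi; simp [urtLabel] at hi; omega
  | g+1, Sum.inl x => by
    intro i hi
    have := label_le f g x i hi
    omega
  | g+1, Sum.inr (x, j) => by
    intro i hi
    simp only [urtLabel, List.mem_append, List.mem_singleton] at hi
    rcases hi with hi | rfl
    · have := label_le f g x i hi; omega
    · exact le_refl _
  
lemma label_sorted (f : ℕ) : ∀ g (x : URTV f g), (urtLabel f g x).Pairwise (· < ·)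
  | 0, _ => by simp [urtLabel]
  | g+1, Sum.inl x => label_sorted f g x
  | g+1, Sum.inr (x, j) => by
    show (urtLabel f g x ++ [g+1]).Pairwise (· < ·)
    rw [List.pairwise_append]
    refine ⟨label_sorted f g x, by simp, ?_⟩
    intro a ha b hb
    simp only [List.mem_singleton] at hb
    subst hb
    have := label_le f g x a ha
    omega

def tSN (f g : ℕ) (L : List ℕ) : ℕ := ((L.drop 1).map (fun i => (f+1)^(g-i))).sum

lemma listsum_shift (f g : ℕ) (l : List ℕ) (h : ∀ i ∈ l, i ≤ g) :
    (l.map fun i => (f+1)^(g+1-i)).sum = (f+1) * (l.map fun i => (f+1)^(g-i)).sum := by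
  induction l with
  | nil => simp
  | cons a t ih =>
    have ha : a ≤ g := h a (by simp)
    have hgs : g + 1 - a = (g - a) + 1 := by omega
    simp only [List.map_cons, List.sum_cons]
    rw [ih (fun i hi => h i (by simp [hi])), hgs, pow_succ]
    ring

lemma tSN_shift (f g : ℕ) (L : List ℕ) (h : ∀ i ∈ L, i ≤ g) :
    tSN f (g+1) L = (f+1) * tSN f g L := by
  unfold tSN
  exact listsum_shift f g _ (fun i hi => h i (List.mem_of_mem_drop hi))

lemma DDR_formula (f : ℕ) : ∀ g (x : URTV f g),
    DDR f g x = DDR f g (urtCenter f g)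
      + (((urtLabel f g x).length : ℝ) - 1) * ((f:ℝ)+1)^g
      - 2 * (tSN f g (urtLabel f g x) : ℝ) := by
  intro g
  induction g with
  | zero =>
    intro x
    have hx : x = urtCenter f 0 := by
      have h : ∀ a b : Unit, a = b := fun a b => rfl
      exact h x (urtCenter f 0)
    subst hx
    simp [urtLabel, tSN]
  | succ g IH =>
    have hinl : ∀ x : URTV f g,
        DDR f (g+1) (Sum.inl x) = DDR f (g+1) (urtCenter f (g+1))
          + (((urtLabel f (g+1) (Sum.inl x)).length : ℝ) - 1) * ((f:ℝ)+1)^(g+1)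
          - 2 * (tSN f (g+1) (urtLabel f (g+1) (Sum.inl x)) : ℝ) := by
      intro x
      have hlab : urtLabel f (g+1) (Sum.inl x) = urtLabel f g x := rfl
      have hcen : urtCenter f (g+1) = Sum.inl (urtCenter f g) := rfl
      rw [hlab, hcen, DDR_inl, DDR_inl, IH x,
        tSN_shift f g _ (label_le f g x)]
      push_cast
      ring
    rintro (x | ⟨x, i⟩)
    · exact hinl x
    · have hlab : urtLabel f (g+1) (Sum.inr (x,i)) = urtLabel f g x ++ [g+1] := rfl
      have hlab2 : urtLabel f (g+1) (Sum.inl x) = urtLabel f g x := rfl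
      obtain ⟨t, ht⟩ := label_shape f g x
      have hdrop : (urtLabel f g x ++ [g+1]).drop 1 = (urtLabel f g x).drop 1 ++ [g+1] := by
        rw [List.drop_append_of_le_length (by rw [ht]; simp)]
      have htSN : tSN f (g+1) (urtLabel f g x ++ [g+1])
          = tSN f (g+1) (urtLabel f g x) + 1 := by
        unfold tSN
        rw [hdrop, List.map_append, List.sum_append]
        simp
      rw [DDR_inr, hinl x, hlab, hlab2, htSN]
      have hlen : (urtLabel f g x ++ [g+1]).length = (urtLabel f g x).length + 1 := by
        simp
      rw [hlen]
      push_cast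
      ring

lemma powsum (f g : ℕ) : ∀ (l : List ℕ) (m : ℕ), l.Pairwise (· < ·) →
    (∀ i ∈ l, m ≤ i ∧ i ≤ g) →
    f * ((l.map fun i => (f+1)^(g-i)).sum) + 1 ≤ (f+1)^(g-m+1)
  | [], m, _, _ => by
    simp only [List.map_nil, List.sum_nil, Nat.mul_zero, Nat.zero_add]
    exact Nat.one_le_pow _ _ (by omega)
  | a :: t, m, hs, hb => by
    have hma : m ≤ a := (hb a (by simp)).1
    have hag : a ≤ g := (hb a (by simp)).2
    have hs' : t.Pairwise (· < ·) := hs.of_cons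
    have hlt : ∀ b ∈ t, a < b := fun b hb' => (List.pairwise_cons.mp hs).1 b hb'
    match t with
    | [] =>
      simp only [List.map_cons, List.map_nil, List.sum_cons, List.sum_nil, Nat.add_zero]
      have h1 : (f+1)^(g-a) ≤ (f+1)^(g-m) := Nat.pow_le_pow_right (by omega) (by omega)
      have h2 : (f+1)^(g-m+1) = (f+1)^(g-m) * (f+1) := pow_succ _ _
      have h3 : 1 ≤ (f+1)^(g-m) := Nat.one_le_pow _ _ (by omega)
      nlinarith
    | b :: t' =>
      have hblt : a < b := hlt b (by simp)
      have hag' : a < g := lt_of_lt_of_le hblt (hb b (by simp [List.mem_cons])).2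
      have ih := powsum f g (b :: t') (a+1) hs'
        (fun i hi => ⟨hlt i hi, (hb i (by simp [hi])).2⟩)
      have heq : g - (a+1) + 1 = g - a := by omega
      rw [heq] at ih
      -- goal : f * ((f+1)^(g-a) + S) + 1 ≤ (f+1)^(g-m+1)
      simp only [List.map_cons, List.sum_cons] at ih ⊢
      have h2 : (f+1)^(g-a+1) = (f+1)^(g-a) * (f+1) := pow_succ _ _
      have h4 : (f+1)^(g-a+1) ≤ (f+1)^(g-m+1) := Nat.pow_le_pow_right (by omega) (by omega)
      nlinarith

lemma label_tail_facts (f g : ℕ) (x : URTV f g) :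
    ∃ t : List ℕ, urtLabel f g x = 0 :: t ∧ t.Pairwise (· < ·) ∧
      (∀ i ∈ t, 1 ≤ i ∧ i ≤ g) := by
  obtain ⟨t, ht⟩ := label_shape f g x
  refine ⟨t, ht, ?_, ?_⟩
  · have := label_sorted f g x
    rw [ht] at this
    exact this.of_cons
  · intro i hi
    have hs := label_sorted f g x
    rw [ht] at hs
    have h1 : 0 < i := (List.pairwise_cons.mp hs).1 i hi
    have h2 : i ≤ g := label_le f g x i (by rw [ht]; simp [hi])
    omega

lemma tSN_lt_half (f g : ℕ) (hf : 2 ≤ f) (x : URTV f g) :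
    2 * (tSN f g (urtLabel f g x)) + 1 ≤ (f+1)^g := by
  obtain ⟨t, ht, hs, hb⟩ := label_tail_facts f g x
  have htsn : tSN f g (urtLabel f g x) = ((t.map fun i => (f+1)^(g-i)).sum) := by
    unfold tSN
    rw [ht]
    rfl
  rcases g with _ | g'
  · -- g = 0 : t = []
    have ht0 : t = [] := by
      cases t with
      | nil => rfl
      | cons a t' => exact absurd (hb a (by simp)) (by omega)
    rw [htsn, ht0]
    simp
  · have hp := powsum f (g'+1) t 1 hs hb
    have heq : g' + 1 - 1 + 1 = g' + 1 := by omega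
    rw [heq] at hp
    have h2 : 2 * ((t.map fun i => (f+1)^(g'+1-i)).sum)
        ≤ f * ((t.map fun i => (f+1)^(g'+1-i)).sum) := by
      apply Nat.mul_le_mul_right
      omega
    rw [htsn]
    omega

lemma psum_lt (f g : ℕ) (hf : 1 ≤ f) (a b : ℕ) (rA rB : List ℕ)
    (hsA : (a :: rA).Pairwise (· < ·)) (hA : ∀ i ∈ a :: rA, i ≤ g)
    (hbg : b ≤ g) (hba : b < a) :
    (((a :: rA).map fun i => (f+1)^(g-i)).sum)
      < (((b :: rB).map fun i => (f+1)^(g-i)).sum) := by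
  have hhead : ∀ i ∈ a :: rA, a ≤ i := by
    intro i hi
    rcases List.mem_cons.mp hi with rfl | hi'
    · exact le_refl _
    · exact le_of_lt ((List.pairwise_cons.mp hsA).1 i hi')
  have h1 := powsum f g (a :: rA) a hsA (fun i hi => ⟨hhead i hi, hA i hi⟩)
  have hag : a ≤ g := hA a (by simp)
  have h2 : (f+1)^(g-a+1) ≤ (f+1)^(g-b) := Nat.pow_le_pow_right (by omega) (by omega)
  set SA := (((a :: rA).map fun i => (f+1)^(g-i)).sum) with hSA
  have h3 : SA ≤ f * SA := Nat.le_mul_of_pos_left _ (by omega)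
  have h4 : (f+1)^(g-b) ≤ (((b :: rB).map fun i => (f+1)^(g-i)).sum) := by
    simp only [List.map_cons, List.sum_cons]
    omega
  omega

lemma tSN_lt (f g : ℕ) (hf : 1 ≤ f) (x y : URTV f g)
    (hlen : (urtLabel f g x).length = (urtLabel f g y).length)
    (z : ℕ) (hz : z < (urtLabel f g x).length)
    (hpre : ∀ l < z, (urtLabel f g x).getD l 0 = (urtLabel f g y).getD l 0)
    (hgt : (urtLabel f g y).getD z 0 < (urtLabel f g x).getD z 0) :
    tSN f g (urtLabel f g x) < tSN f g (urtLabel f g y) := by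
  set Lx := urtLabel f g x with hLx
  set Ly := urtLabel f g y with hLy
  have hzy : z < Ly.length := hlen ▸ hz
  have hz1 : 1 ≤ z := by
    by_contra h
    have hz0 : z = 0 := by omega
    subst hz0
    obtain ⟨tx, htx⟩ := label_shape f g x
    rw [← hLx] at htx
    rw [htx] at hgt
    simp [List.getD] at hgt
  have htake : Lx.take z = Ly.take z := by
    apply List.ext_getElem
    · simp [hlen]
    · intro i h1 h2
      have hi : i < z := by
        have := h1
        simp only [List.length_take] at this
        omega
      rw [List.getElem_take, List.getElem_take]
      calc Lx[i] = Lx.getD i 0 := (List.getD_eq_getElem Lx 0 (by omega)).symm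
        _ = Ly.getD i 0 := hpre i hi
        _ = Ly[i] := List.getD_eq_getElem Ly 0 (by omega)
  have hlx1 : (Lx.take z).length = z := by
    rw [List.length_take]
    omega
  have hly1 : (Ly.take z).length = z := by
    rw [List.length_take]
    omega
  have hdx : Lx.drop 1 = (Lx.take z).drop 1 ++ Lx.drop z := by
    conv_lhs => rw [← List.take_append_drop z Lx]
    rw [List.drop_append_of_le_length (by omega)]
  have hdy : Ly.drop 1 = (Ly.take z).drop 1 ++ Ly.drop z := by
    conv_lhs => rw [← List.take_append_drop z Ly]
    rw [List.drop_append_of_le_length (by omega)]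
  set a := Lx.getD z 0 with ha
  set b := Ly.getD z 0 with hb
  have hdzx : Lx.drop z = a :: Lx.drop (z+1) := by
    rw [List.drop_eq_getElem_cons hz, ha, List.getD_eq_getElem Lx 0 hz]
  have hdzy : Ly.drop z = b :: Ly.drop (z+1) := by
    rw [List.drop_eq_getElem_cons hzy, hb, List.getD_eq_getElem Ly 0 hzy]
  have hsortx : (a :: Lx.drop (z+1)).Pairwise (· < ·) := by
    rw [← hdzx]
    exact (label_sorted f g x).sublist (List.drop_sublist z Lx)
  have hboundx : ∀ i ∈ a :: Lx.drop (z+1), i ≤ g := by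
    intro i hi
    rw [← hdzx] at hi
    exact label_le f g x i (List.mem_of_mem_drop hi)
  have hbg : b ≤ g := by
    have : b ∈ Ly := by
      rw [hb, List.getD_eq_getElem Ly 0 hzy]
      exact List.getElem_mem _
    exact label_le f g y b this
  have hlt := psum_lt f g hf a b (Lx.drop (z+1)) (Ly.drop (z+1)) hsortx hboundx hbg hgt
  unfold tSN
  rw [hdx, hdy, htake, List.map_append, List.map_append, List.sum_append, List.sum_append,
    hdzx, hdzy]
  omega

lemma cN_pos (f g : ℕ) : 0 < cN f g := by
  unfold cN
  have := urtNonempty f g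
  have h : 0 < Fintype.card (URTV f g) := Fintype.card_pos
  positivity

lemma gdag_lt_of_DDR (f g : ℕ) (x y : URTV f g) (h : DDR f g y < DDR f g x) :
    gdag (urtGraph f g) y y < gdag (urtGraph f g) x x := by
  have hsub := gdag_diag_sub f g x y
  have hpos : 0 < cN f g * (DDR f g x - DDR f g y) :=
    mul_pos (cN_pos f g) (sub_pos.mpr h)
  linarith [hsub]

lemma gdag_eq_of_DDR (f g : ℕ) (x y : URTV f g) (h : DDR f g x = DDR f g y) :
    gdag (urtGraph f g) x x = gdag (urtGraph f g) y y := by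
  have hsub := gdag_diag_sub f g x y
  rw [h] at hsub
  simp at hsub
  linarith

lemma DDR_lt_len (f g : ℕ) (hf : 2 ≤ f) (x y : URTV f g)
    (hlen : (urtLabel f g y).length < (urtLabel f g x).length) :
    DDR f g y < DDR f g x := by
  have hsub : DDR f g x - DDR f g y
      = (((urtLabel f g x).length : ℝ) - ((urtLabel f g y).length : ℝ)) * ((f:ℝ)+1)^g
        - 2 * ((tSN f g (urtLabel f g x) : ℝ) - (tSN f g (urtLabel f g y) : ℝ)) := by
    rw [DDR_formula f g x, DDR_formula f g y]
    ring
  have hhalf := tSN_lt_half f g hf x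
  have h1 : 2 * (tSN f g (urtLabel f g x) : ℝ) + 1 ≤ ((f:ℝ)+1)^g := by
    have hc : (((f+1)^g : ℕ) : ℝ) = ((f:ℝ)+1)^g := by push_cast; ring
    rw [← hc]
    exact_mod_cast hhalf
  have h2 : ((urtLabel f g y).length : ℝ) + 1 ≤ ((urtLabel f g x).length : ℝ) := by
    exact_mod_cast hlen
  have h3 : (0:ℝ) ≤ (tSN f g (urtLabel f g y) : ℝ) := by positivity
  have h4 : (0:ℝ) < ((f:ℝ)+1)^g := by positivity
  nlinarith [hsub, mul_nonneg
    (by linarith : (0:ℝ) ≤ ((urtLabel f g x).length : ℝ) - ((urtLabel f g y).length : ℝ) - 1)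
    (le_of_lt h4)]

lemma DDR_lt_label (f g : ℕ) (hf : 2 ≤ f) (x y : URTV f g)
    (hlen : (urtLabel f g x).length = (urtLabel f g y).length)
    (z : ℕ) (hz : z < (urtLabel f g x).length)
    (hpre : ∀ l < z, (urtLabel f g x).getD l 0 = (urtLabel f g y).getD l 0)
    (hgt : (urtLabel f g y).getD z 0 < (urtLabel f g x).getD z 0) :
    DDR f g y < DDR f g x := by
  have ht := tSN_lt f g (by omega) x y hlen z hz hpre hgt
  have hsub : DDR f g x - DDR f g y
      = (((urtLabel f g x).length : ℝ) - ((urtLabel f g y).length : ℝ)) * ((f:ℝ)+1)^g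
        - 2 * ((tSN f g (urtLabel f g x) : ℝ) - (tSN f g (urtLabel f g y) : ℝ)) := by
    rw [DDR_formula f g x, DDR_formula f g y]
    ring
  rw [hlen] at hsub
  have h1 : (tSN f g (urtLabel f g x) : ℝ) + 1 ≤ (tSN f g (urtLabel f g y) : ℝ) := by
    exact_mod_cast ht
  have : DDR f g x - DDR f g y
      = 2 * ((tSN f g (urtLabel f g y) : ℝ) - (tSN f g (urtLabel f g x) : ℝ)) := by
    rw [hsub]
    ring
  linarith


/-- For `f ≥ 2`, comparison of the diagonal entries of the pseudoinverse `L†(g)` of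
the Laplacian of the uniform recursive tree `U_g` for two different nodes `x`, `y`
with labels `{i_0, …, i_{n_i}}` and `{j_0, …, j_{n_j}}` (so the label lists have
lengths `n_i + 1` and `n_j + 1`):
(1) if `n_i > n_j` then `L†_{xx} > L†_{yy}`;
(2) if `n_i < n_j` then `L†_{xx} < L†_{yy}`;
(3) if `n_i = n_j` and the labels first differ at position `z`, then
    `L†_{xx} > L†_{yy}` when `i_z > j_z` and `L†_{xx} < L†_{yy}` when `i_z < j_z`;
(4) if the labels coincide, then `L†_{xx} = L†_{yy}`. -/
theorem stmt_19 (f : ℕ) (hf : 2 ≤ f) (g : ℕ) (x y : URTV f g) (hxy : x ≠ y) :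
    ((urtLabel f g x).length > (urtLabel f g y).length →
      gdag (urtGraph f g) x x > gdag (urtGraph f g) y y) ∧
    ((urtLabel f g x).length < (urtLabel f g y).length →
      gdag (urtGraph f g) x x < gdag (urtGraph f g) y y) ∧
    ((urtLabel f g x).length = (urtLabel f g y).length →
      ∀ z < (urtLabel f g x).length,
        (∀ l < z, (urtLabel f g x).getD l 0 = (urtLabel f g y).getD l 0) →
        (urtLabel f g x).getD z 0 ≠ (urtLabel f g y).getD z 0 →
        (((urtLabel f g x).getD z 0 > (urtLabel f g y).getD z 0 →
            gdag (urtGraph f g) x x > gdag (urtGraph f g) y y) ∧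
         ((urtLabel f g x).getD z 0 < (urtLabel f g y).getD z 0 →
            gdag (urtGraph f g) x x < gdag (urtGraph f g) y y))) ∧
    (urtLabel f g x = urtLabel f g y →
      gdag (urtGraph f g) x x = gdag (urtGraph f g) y y) := by
  refine ⟨?_, ?_, ?_, ?_⟩
  · intro h
    exact gdag_lt_of_DDR f g x y (DDR_lt_len f g hf x y h)
  · intro h
    exact gdag_lt_of_DDR f g y x (DDR_lt_len f g hf y x h)
  · intro hlen z hz hpre _hne
    constructor
    · intro hgt
      exact gdag_lt_of_DDR f g x y (DDR_lt_label f g hf x y hlen z hz hpre hgt)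
    · intro hlt
      exact gdag_lt_of_DDR f g y x (DDR_lt_label f g hf y x hlen.symm z (hlen ▸ hz)
        (fun l hl => (hpre l hl).symm) hlt)
  · intro hlab
    have : DDR f g x = DDR f g y := by
      rw [DDR_formula f g x, DDR_formula f g y, hlab]
    exact gdag_eq_of_DDR f g x y this
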